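/- arXiv:1510.03106 — 2 statements merged into one kernel-verified Lean document; each statement's English description precedes it below -/
import Mathlib

section
/- If D and E are nonempty Young diagrams with (D)_r = (E)_r, then D ≤ E or E ≤ D (they are comparable under containment). The same holds if (D)_c = (E)_c. -/
/-- `Dr` is obtained from `D` by shortening the first row to `max (r₂ D) 1`. -/
def IsShortRow (D Dr : YoungDiagram) : Prop :=
  Dr.rowLen 0 = max (D.rowLen 1) 1 ∧ ∀ i : ℕ, 0 < i → Dr.rowLen i = D.rowLen i

/-- `Dc` is obtained from `D` by shortening the first column to `max (c₂ D) 1`. -/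
def IsShortCol (D Dc : YoungDiagram) : Prop :=
  Dc.colLen 0 = max (D.colLen 1) 1 ∧ ∀ i : ℕ, 0 < i → Dc.colLen i = D.colLen i

lemma le_of_rowLen_le (D E : YoungDiagram) (h : ∀ i, D.rowLen i ≤ E.rowLen i) : D ≤ E := by
  intro x hx
  rw [YoungDiagram.mem_iff_lt_rowLen] at hx ⊢
  exact lt_of_lt_of_le hx (h _)

lemma le_of_colLen_le (D E : YoungDiagram) (h : ∀ j, D.colLen j ≤ E.colLen j) : D ≤ E := by
  intro x hx
  rw [YoungDiagram.mem_iff_lt_colLen] at hx ⊢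
  exact lt_of_lt_of_le hx (h _)

/-- If `(D)_r = (E)_r` or `(D)_c = (E)_c` then `D` and `E` are comparable. -/
theorem youngDiagram_comparable_of_short_eq (D E Dr Er Dc Ec : YoungDiagram)
    (hD : D ≠ ⊥) (hE : E ≠ ⊥)
    (hDr : IsShortRow D Dr) (hEr : IsShortRow E Er)
    (hDc : IsShortCol D Dc) (hEc : IsShortCol E Ec) :
    (Dr = Er → D ≤ E ∨ E ≤ D) ∧ (Dc = Ec → D ≤ E ∨ E ≤ D) := by
  constructor
  · intro h
    have heq : ∀ i : ℕ, 0 < i → D.rowLen i = E.rowLen i := by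
      intro i hi
      rw [← hDr.2 i hi, h, hEr.2 i hi]
    rcases le_total (D.rowLen 0) (E.rowLen 0) with h0 | h0
    · left
      apply le_of_rowLen_le
      intro i
      rcases Nat.eq_zero_or_pos i with rfl | hi
      · exact h0
      · exact (heq i hi).le
    · right
      apply le_of_rowLen_le
      intro i
      rcases Nat.eq_zero_or_pos i with rfl | hi
      · exact h0
      · exact (heq i hi).ge
  · intro h
    have heq : ∀ j : ℕ, 0 < j → D.colLen j = E.colLen j := by
      intro j hj
      rw [← hDc.2 j hj, h, hEc.2 j hj]
    rcases le_total (D.colLen 0) (E.colLen 0) with h0 | h0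
    · left
      apply le_of_colLen_le
      intro j
      rcases Nat.eq_zero_or_pos j with rfl | hj
      · exact h0
      · exact (heq j hj).le
    · right
      apply le_of_colLen_le
      intro j
      rcases Nat.eq_zero_or_pos j with rfl | hj
      · exact h0
      · exact (heq j hj).ge
end

section
/- For every n ≥ 1, the collection D_n of nonempty finite downward-closed subsets of ℕ^n (with the coordinatewise partial order on ℕ^n), ordered by inclusion, is a well partial ordering. -/
/-- For every `n ≥ 1`, the nonempty finite downward-closed subsets of `ℕ^n`
(with the coordinatewise order), ordered by inclusion, form a well partial ordering. -/
theorem wpo_finite_lowerSets (n : ℕ) (hn : 0 < n) (A : ℕ → Set (Fin n → ℕ))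
    (hfin : ∀ i, (A i).Finite) (hne : ∀ i, (A i).Nonempty)
    (hlow : ∀ i, IsLowerSet (A i)) :
    ∃ i j : ℕ, i < j ∧ A i ⊆ A j := by
  haveI : ∀ i : Fin n, IsWellOrder ℕ (· < ·) := fun _ => inferInstance
  have hpwo : (Set.univ : Set (Fin n → ℕ)).PartiallyWellOrderedOn (· ≤ ·) :=
    (Set.isPWO_of_wellQuasiOrderedLE Set.univ)
  have higman := hpwo.partiallyWellOrderedOn_sublistForall₂ (· ≤ ·)
  set f : ℕ → List (Fin n → ℕ) := fun i => (hfin i).toFinset.toList with hf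
  obtain ⟨i, j, hij, hrel⟩ := higman.exists_lt (f := f) (fun i x _ => Set.mem_univ x)
  refine ⟨i, j, hij, fun x hx => ?_⟩
  have hxl : x ∈ f i := by simp [hf, Set.Finite.mem_toFinset, hx]
  obtain ⟨l', hforall, hsub⟩ := List.sublistForall₂_iff.mp hrel
  obtain ⟨⟨k, hk⟩, hkx⟩ := List.mem_iff_get.mp hxl
  have hk' : k < l'.length := hforall.length_eq ▸ hk
  have hxy : x ≤ l'.get ⟨k, hk'⟩ := hkx ▸ hforall.get hk hk'
  have hyj : l'.get ⟨k, hk'⟩ ∈ A j := by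
    have : l'.get ⟨k, hk'⟩ ∈ f j := hsub.subset (List.get_mem _ _)
    simpa [hf, Set.Finite.mem_toFinset] using this
  exact hlow j hxy hyj
end
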